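/- Under Assumption 1 (the loss 𝓛 is differentiable with L-Lipschitz gradient and finite infimum 𝓛*) and Assumption 2 (η < 2/(2τ+1)), the sequence of parameter iterates produced by the noiseless asynchronous block coordinate descent updates satisfies lim_{s→∞} ‖∇𝓛(Θ^(s))‖²₂ = 0. -/

import Mathlib

open Finset Filter
open scoped RealInnerProductSpace

noncomputable section

/-- Projection of a parameter vector onto the coordinates of block `n`. -/
def blkProj {P N : ℕ} (blk : Fin P → Fin (N + 1)) (n : Fin (N + 1))
    (x : EuclideanSpace ℝ (Fin P)) : EuclideanSpace ℝ (Fin P) :=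
  WithLp.toLp 2 fun i => if blk i = n then x i else 0

namespace BCDAux

variable {P N : ℕ} (blk : Fin P → Fin (N + 1))

lemma blkProj_add (n : Fin (N + 1)) (x y : EuclideanSpace ℝ (Fin P)) :
    blkProj blk n (x + y) = blkProj blk n x + blkProj blk n y := by
  ext i
  simp only [blkProj, PiLp.add_apply, PiLp.toLp_apply]
  split <;> simp

lemma blkProj_zero (n : Fin (N + 1)) :
    blkProj blk n (0 : EuclideanSpace ℝ (Fin P)) = 0 := by
  ext i; simp [blkProj]

lemma blkProj_sub (n : Fin (N + 1)) (x y : EuclideanSpace ℝ (Fin P)) :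
    blkProj blk n (x - y) = blkProj blk n x - blkProj blk n y := by
  ext i
  simp only [blkProj, PiLp.sub_apply, PiLp.toLp_apply]
  split <;> simp

lemma blkProj_smul (n : Fin (N + 1)) (c : ℝ) (x : EuclideanSpace ℝ (Fin P)) :
    blkProj blk n (c • x) = c • blkProj blk n x := by
  ext i
  simp only [blkProj, PiLp.smul_apply, smul_eq_mul, PiLp.toLp_apply]
  split <;> simp

lemma blkProj_sum {ι : Type*} (n : Fin (N + 1)) (s : Finset ι)
    (f : ι → EuclideanSpace ℝ (Fin P)) :
    blkProj blk n (∑ i ∈ s, f i) = ∑ i ∈ s, blkProj blk n (f i) := by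
  classical
  induction s using Finset.cons_induction with
  | empty => simp [blkProj_zero]
  | cons a s ha ih => rw [Finset.sum_cons, blkProj_add, ih, Finset.sum_cons]

lemma blkProj_blkProj (n m : Fin (N + 1)) (x : EuclideanSpace ℝ (Fin P)) :
    blkProj blk m (blkProj blk n x) = if n = m then blkProj blk n x else 0 := by
  ext i
  by_cases h : n = m
  · subst h
    by_cases h2 : blk i = n <;> simp [blkProj, h2]
  · by_cases h2 : blk i = m <;> by_cases h3 : blk i = n <;>
      simp_all [blkProj]

lemma sum_blkProj (x : EuclideanSpace ℝ (Fin P)) :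
    ∑ n : Fin (N + 1), blkProj blk n x = x := by
  ext i
  rw [WithLp.ofLp_sum, Finset.sum_apply i Finset.univ fun n => blkProj blk n x]
  simp only [blkProj]
  rw [Finset.sum_ite_eq Finset.univ (blk i) (fun _ => x i)]
  simp

lemma inner_blkProj (n : Fin (N + 1)) (x y : EuclideanSpace ℝ (Fin P)) :
    ⟪x, blkProj blk n y⟫ = ⟪blkProj blk n x, blkProj blk n y⟫ := by
  simp only [PiLp.inner_apply, RCLike.inner_apply, conj_trivial, blkProj]
  refine Finset.sum_congr rfl fun i _ => ?_
  by_cases h : blk i = n <;> simp [h]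

lemma norm_blkProj_le (n : Fin (N + 1)) (x : EuclideanSpace ℝ (Fin P)) :
    ‖blkProj blk n x‖ ≤ ‖x‖ := by
  have h1 : ⟪x, blkProj blk n x⟫ = ‖blkProj blk n x‖ ^ 2 := by
    rw [inner_blkProj, real_inner_self_eq_norm_sq]
  have h2 := real_inner_le_norm x (blkProj blk n x)
  nlinarith [norm_nonneg (blkProj blk n x), norm_nonneg x]

/-- Descent lemma for functions with Lipschitz gradient. -/
lemma descent_lemma {F : Type*} [NormedAddCommGroup F] [InnerProductSpace ℝ F] [CompleteSpace F]
    (f : F → ℝ) (g : F → F) (L : ℝ)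
    (hgrad : ∀ x, HasGradientAt f (g x) x)
    (hLip : ∀ x y, ‖g x - g y‖ ≤ L * ‖x - y‖) (x y : F) :
    f y ≤ f x + ⟪g x, y - x⟫ + L / 2 * ‖y - x‖ ^ 2 := by
  set d := y - x with hd
  set u : ℝ → ℝ := fun t => f x + t * ⟪g x, d⟫ + L * t ^ 2 / 2 * ‖d‖ ^ 2 - f (x + t • d)
    with hu
  have hcurve : ∀ t : ℝ, HasDerivAt (fun t : ℝ => x + t • d) d t := by
    intro t
    simpa using (hasDerivAt_id t).smul_const d |>.const_add x
  have hfd : ∀ t : ℝ, HasDerivAt (fun t => f (x + t • d)) ⟪g (x + t • d), d⟫ t := by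
    intro t
    have hF := (hgrad (x + t • d)).hasFDerivAt
    have := hF.comp_hasDerivAt t (hcurve t)
    simp [InnerProductSpace.toDual_apply_apply] at this
    exact this
  have hud : ∀ t : ℝ, HasDerivAt u
      (⟪g x, d⟫ + L * t * ‖d‖ ^ 2 - ⟪g (x + t • d), d⟫) t := by
    intro t
    have h1 : HasDerivAt (fun t : ℝ => f x + t * ⟪g x, d⟫ + L * t ^ 2 / 2 * ‖d‖ ^ 2)
        (⟪g x, d⟫ + L * t * ‖d‖ ^ 2) t := by
      have ha : HasDerivAt (fun t : ℝ => t * ⟪g x, d⟫) ⟪g x, d⟫ t := by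
        simpa using (hasDerivAt_id t).mul_const ⟪g x, d⟫
      have hb : HasDerivAt (fun t : ℝ => L * t ^ 2 / 2 * ‖d‖ ^ 2) (L * t * ‖d‖ ^ 2) t := by
        have : HasDerivAt (fun t : ℝ => t ^ 2) (2 * t) t := by
          simpa using hasDerivAt_pow 2 t
        have := ((this.const_mul L).div_const 2).mul_const (‖d‖ ^ 2)
        refine this.congr_deriv ?_
        ring
      exact (ha.const_add (f x)).add hb
    exact h1.sub (hfd t)
  have hmono : MonotoneOn u (Set.Icc (0 : ℝ) 1) := by
    apply monotoneOn_of_deriv_nonneg (convex_Icc 0 1)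
    · exact fun t _ => ((hud t).continuousAt).continuousWithinAt
    · exact fun t _ => ((hud t).differentiableAt).differentiableWithinAt
    · intro t ht
      rw [interior_Icc] at ht
      rw [(hud t).deriv]
      have hip : ⟪g (x + t • d) - g x, d⟫ ≤ L * t * ‖d‖ ^ 2 := by
        have h1 := real_inner_le_norm (g (x + t • d) - g x) d
        have h2 := hLip (x + t • d) x
        have h3 : ‖x + t • d - x‖ = t * ‖d‖ := by
          rw [add_sub_cancel_left, norm_smul, Real.norm_eq_abs, abs_of_pos ht.1]
        rw [h3] at h2
        have h4 := mul_le_mul_of_nonneg_right h2 (norm_nonneg d)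
        nlinarith
      have : ⟪g (x + t • d), d⟫ - ⟪g x, d⟫ = ⟪g (x + t • d) - g x, d⟫ := by
        rw [inner_sub_left]
      linarith
  have h01 := hmono (Set.left_mem_Icc.mpr zero_le_one) (Set.right_mem_Icc.mpr zero_le_one)
    zero_le_one
  simp only [hu] at h01
  have e0 : x + (0 : ℝ) • d = x := by simp
  have e1 : x + (1 : ℝ) • d = y := by simp [hd]
  rw [e0, e1] at h01
  simp at h01
  linarith

end BCDAux
set_option maxHeartbeats 2000000 in
open BCDAux in
/-- Noiseless asynchronous block coordinate descent converges to a stationary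
point: under Assumption 1 and Assumption 2, ‖∇𝓛(Θ^(s))‖² → 0 as s → ∞. -/
theorem noiseless_gradient_tendsto_zero
    {P N E : ℕ} (hE : 1 ≤ E)
    (blk : Fin P → Fin (N + 1))
    (𝓛 : EuclideanSpace ℝ (Fin P) → ℝ)
    (g : EuclideanSpace ℝ (Fin P) → EuclideanSpace ℝ (Fin P))
    (Lc Lstar η α : ℝ) (τ : ℕ) (hτ : τ = (2 * N + 1) * E)
    (Θ : ℕ → EuclideanSpace ℝ (Fin P))
    (hatΘ : ℕ → Fin (N + 1) → EuclideanSpace ℝ (Fin P))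
    (ms : ℕ → Fin (N + 1))
    -- Assumption 1
    (hLpos : 0 < Lc)
    (hgrad : ∀ x, HasGradientAt 𝓛 (g x) x)
    (hLip : ∀ x y, ‖g x - g y‖ ≤ Lc * ‖x - y‖)
    (hglb : IsGLB (Set.range 𝓛) Lstar)
    -- schedule: each window of (N+1)E consecutive steps updates every block E times
    (hsched : ∀ t : ℕ, ∀ n : Fin (N + 1),
      ((Finset.Icc (t * ((N + 1) * E) + 1) ((t + 1) * ((N + 1) * E))).filter
        fun s => ms s = n).card = E)
    -- stale parameter copies
    (hstale : ∀ s, 1 ≤ s → ∀ n m : Fin (N + 1), ∃ r : ℕ,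
      max 1 (s - τ) ≤ r ∧ r ≤ s ∧
      blkProj blk m (hatΘ s n) = blkProj blk m (Θ r))
    -- noiseless update
    (hupd : ∀ s, 1 ≤ s →
      Θ (s + 1) = Θ s - (η / Lc) • blkProj blk (ms s) (g (hatΘ s (ms s))))
    -- Assumption 2
    (hηpos : 0 < η) (hηlt : η < 2 / (2 * (τ : ℝ) + 1))
    (hα : α = 2 / (η * (2 * (τ : ℝ) + 1))) (hα1 : 1 < α) :
    Tendsto (fun s : ℕ => ‖g (Θ s)‖ ^ 2) atTop (nhds 0) := by
  classical
  set h := η / Lc with hh_def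
  have hh : 0 < h := div_pos hηpos hLpos
  have hLh : Lc * h = η := by rw [hh_def]; field_simp
  clear_value h
  have hτ1 : 1 ≤ τ := by
    subst hτ
    calc 1 = 1 * 1 := by norm_num
    _ ≤ (2 * N + 1) * E := Nat.mul_le_mul (by omega) hE
  set G : ℕ → EuclideanSpace ℝ (Fin P) :=
    fun j => blkProj blk (ms j) (g (hatΘ j (ms j))) with hG
  set a : ℕ → ℝ := fun j => ‖G j‖ ^ 2 with ha
  have ha0 : ∀ j, 0 ≤ a j := fun j => sq_nonneg _
  have hdelta : ∀ s, 1 ≤ s → Θ (s + 1) - Θ s = (-h) • G s := by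
    intro s hs
    rw [hupd s hs, sub_sub_cancel_left, neg_smul]
  have hnormdelta : ∀ s, 1 ≤ s → ‖Θ (s + 1) - Θ s‖ = h * ‖G s‖ := by
    intro s hs
    rw [hdelta s hs, norm_smul, Real.norm_eq_abs, abs_neg, abs_of_pos hh]
  have hblkdelta : ∀ s, 1 ≤ s → ∀ m : Fin (N + 1),
      ‖blkProj blk m (Θ (s + 1) - Θ s)‖ = if ms s = m then h * ‖G s‖ else 0 := by
    intro s hs m
    rw [hdelta s hs, blkProj_smul]
    have hb : blkProj blk m (G s) = if ms s = m then G s else 0 := by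
      rw [hG]
      exact blkProj_blkProj blk (ms s) m _
    rw [hb]
    by_cases hm : ms s = m
    · rw [if_pos hm, if_pos hm, norm_smul, Real.norm_eq_abs, abs_neg, abs_of_pos hh]
    · rw [if_neg hm, if_neg hm, smul_zero, norm_zero]
  have htel : ∀ r s : ℕ, r ≤ s →
      Θ s - Θ r = ∑ i ∈ Finset.Ico r s, (Θ (i + 1) - Θ i) := by
    intro r s hrs
    rw [Finset.sum_Ico_eq_sub _ hrs, Finset.sum_range_sub (fun i => Θ i),
      Finset.sum_range_sub (fun i => Θ i)]
    abel
  -- staleness bound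
  have hstaleb : ∀ s, 1 ≤ s → ∀ n : Fin (N + 1),
      ‖Θ s - hatΘ s n‖ ≤ h * ∑ j ∈ Finset.Icc (max 1 (s - τ)) (s - 1), ‖G j‖ := by
    intro s hs n
    have hmbound : ∀ m : Fin (N + 1), ‖blkProj blk m (Θ s - hatΘ s n)‖ ≤
        ∑ j ∈ Finset.Icc (max 1 (s - τ)) (s - 1), if ms j = m then h * ‖G j‖ else 0 := by
      intro m
      obtain ⟨r, hr1, hr2, hr3⟩ := hstale s hs n m
      have h1 : blkProj blk m (Θ s - hatΘ s n)
          = ∑ i ∈ Finset.Ico r s, blkProj blk m (Θ (i + 1) - Θ i) := by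
        rw [blkProj_sub, hr3, ← blkProj_sub, htel r s hr2, blkProj_sum]
      rw [h1]
      calc ‖∑ i ∈ Finset.Ico r s, blkProj blk m (Θ (i + 1) - Θ i)‖
          ≤ ∑ i ∈ Finset.Ico r s, ‖blkProj blk m (Θ (i + 1) - Θ i)‖ := norm_sum_le _ _
        _ = ∑ i ∈ Finset.Ico r s, if ms i = m then h * ‖G i‖ else 0 := by
            refine Finset.sum_congr rfl fun i hi => ?_
            rw [Finset.mem_Ico] at hi
            exact hblkdelta i (le_trans (le_trans (le_max_left 1 _) hr1) hi.1) m
        _ ≤ ∑ j ∈ Finset.Icc (max 1 (s - τ)) (s - 1), if ms j = m then h * ‖G j‖ else 0 := by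
            apply Finset.sum_le_sum_of_subset_of_nonneg
            · intro j hj
              rw [Finset.mem_Ico] at hj
              rw [Finset.mem_Icc]
              refine ⟨le_trans hr1 hj.1, by omega⟩
            · intro j _ _
              split
              · exact mul_nonneg hh.le (norm_nonneg _)
              · exact le_rfl
    calc ‖Θ s - hatΘ s n‖
        = ‖∑ m : Fin (N + 1), blkProj blk m (Θ s - hatΘ s n)‖ := by
          rw [sum_blkProj]
      _ ≤ ∑ m : Fin (N + 1), ‖blkProj blk m (Θ s - hatΘ s n)‖ := norm_sum_le _ _
      _ ≤ ∑ m : Fin (N + 1), ∑ j ∈ Finset.Icc (max 1 (s - τ)) (s - 1),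
            if ms j = m then h * ‖G j‖ else 0 :=
          Finset.sum_le_sum fun m _ => hmbound m
      _ = ∑ j ∈ Finset.Icc (max 1 (s - τ)) (s - 1), ∑ m : Fin (N + 1),
            if ms j = m then h * ‖G j‖ else 0 := Finset.sum_comm
      _ = ∑ j ∈ Finset.Icc (max 1 (s - τ)) (s - 1), h * ‖G j‖ := by
          refine Finset.sum_congr rfl fun j _ => ?_
          rw [Finset.sum_ite_eq Finset.univ (ms j) fun _ => h * ‖G j‖]
          simp
      _ = h * ∑ j ∈ Finset.Icc (max 1 (s - τ)) (s - 1), ‖G j‖ := by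
          rw [Finset.mul_sum]
  -- per-step descent
  have hstep : ∀ s, 1 ≤ s → 𝓛 (Θ (s + 1)) - 𝓛 (Θ s) ≤
      -h * a s + Lc * h ^ 2 / 2 * (∑ j ∈ Finset.Icc (max 1 (s - τ)) (s - 1), a j)
        + Lc * h ^ 2 * ((τ : ℝ) + 1) / 2 * a s := by
    intro s hs
    have hdesc := descent_lemma 𝓛 g Lc hgrad hLip (Θ s) (Θ (s + 1))
    rw [hdelta s hs] at hdesc
    have e1 : ⟪g (Θ s), (-h) • G s⟫ = -h * ⟪g (Θ s), G s⟫ := real_inner_smul_right _ _ _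
    rw [e1] at hdesc
    have hnormsq : ‖(-h) • G s‖ ^ 2 = h ^ 2 * a s := by
      rw [norm_smul, Real.norm_eq_abs, abs_neg, abs_of_pos hh, mul_pow]
    rw [hnormsq] at hdesc
    set u := blkProj blk (ms s) (g (Θ s)) with hu
    have eP : ⟪g (Θ s), G s⟫ = ⟪u, G s⟫ := by
      simp only [hG, hu]
      exact inner_blkProj blk (ms s) _ _
    have eS : ⟪u - G s, G s⟫ = ⟪u, G s⟫ - a s := by
      rw [inner_sub_left, real_inner_self_eq_norm_sq]
    have hub : ‖u - G s‖ ≤ Lc * ‖Θ s - hatΘ s (ms s)‖ := by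
      have hrepr : u - G s = blkProj blk (ms s) (g (Θ s) - g (hatΘ s (ms s))) := by
        simp only [hG, hu]
        rw [blkProj_sub]
      rw [hrepr]
      exact le_trans (norm_blkProj_le _ _ _) (hLip _ _)
    have hip_lb : -(Lc * ‖Θ s - hatΘ s (ms s)‖ * ‖G s‖) ≤ ⟪u - G s, G s⟫ := by
      have habs := abs_real_inner_le_norm (u - G s) (G s)
      have h2 := mul_le_mul_of_nonneg_right hub (norm_nonneg (G s))
      have h3 := neg_abs_le ⟪u - G s, G s⟫
      have h4 := abs_nonneg ⟪u - G s, G s⟫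
      nlinarith
    have hA := hstaleb s hs (ms s)
    have hcardW : ((Finset.Icc (max 1 (s - τ)) (s - 1)).card : ℝ) ≤ (τ : ℝ) := by
      have : (Finset.Icc (max 1 (s - τ)) (s - 1)).card ≤ τ := by
        rw [Nat.card_Icc]; omega
      exact_mod_cast this
    have hSsum : ∑ j ∈ Finset.Icc (max 1 (s - τ)) (s - 1), (‖G j‖ * ‖G s‖)
        ≤ (∑ j ∈ Finset.Icc (max 1 (s - τ)) (s - 1), a j) / 2 + (τ : ℝ) * a s / 2 := by
      have step1 : ∑ j ∈ Finset.Icc (max 1 (s - τ)) (s - 1), (‖G j‖ * ‖G s‖)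
          ≤ ∑ j ∈ Finset.Icc (max 1 (s - τ)) (s - 1), ((a j + a s) / 2) := by
        refine Finset.sum_le_sum fun j _ => ?_
        simp only [ha]
        nlinarith [sq_nonneg (‖G j‖ - ‖G s‖)]
      have step2 : ∑ j ∈ Finset.Icc (max 1 (s - τ)) (s - 1), ((a j + a s) / 2)
          = (∑ j ∈ Finset.Icc (max 1 (s - τ)) (s - 1), a j) / 2
            + ((Finset.Icc (max 1 (s - τ)) (s - 1)).card : ℝ) * (a s / 2) := by
        rw [← Finset.sum_div, Finset.sum_add_distrib, Finset.sum_const, nsmul_eq_mul]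
        ring
      have step3 : ((Finset.Icc (max 1 (s - τ)) (s - 1)).card : ℝ) * (a s / 2)
          ≤ (τ : ℝ) * a s / 2 := by
        have := mul_le_mul_of_nonneg_right hcardW (by positivity : (0:ℝ) ≤ a s / 2)
        linarith
      linarith
    have hprod : Lc * ‖Θ s - hatΘ s (ms s)‖ * ‖G s‖
        ≤ Lc * h * ((∑ j ∈ Finset.Icc (max 1 (s - τ)) (s - 1), a j) / 2 + (τ : ℝ) * a s / 2) := by
      have s1 : Lc * ‖Θ s - hatΘ s (ms s)‖ * ‖G s‖
          ≤ Lc * (h * ∑ j ∈ Finset.Icc (max 1 (s - τ)) (s - 1), ‖G j‖) * ‖G s‖ := by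
        have := mul_le_mul_of_nonneg_left hA hLpos.le
        exact mul_le_mul_of_nonneg_right this (norm_nonneg _)
      have s2 : Lc * (h * ∑ j ∈ Finset.Icc (max 1 (s - τ)) (s - 1), ‖G j‖) * ‖G s‖
          = Lc * h * ∑ j ∈ Finset.Icc (max 1 (s - τ)) (s - 1), (‖G j‖ * ‖G s‖) := by
        rw [← Finset.sum_mul]; ring
      have s3 := mul_le_mul_of_nonneg_left hSsum (by positivity : (0:ℝ) ≤ Lc * h)
      linarith
    have hfin : -h * ⟪g (Θ s), G s⟫ ≤ -h * a s
        + h * (Lc * h * ((∑ j ∈ Finset.Icc (max 1 (s - τ)) (s - 1), a j) / 2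
          + (τ : ℝ) * a s / 2)) := by
      have hip2 : -⟪u - G s, G s⟫ ≤ Lc * h * ((∑ j ∈ Finset.Icc (max 1 (s - τ)) (s - 1), a j) / 2
          + (τ : ℝ) * a s / 2) := by linarith
      have := mul_le_mul_of_nonneg_left hip2 hh.le
      have heq : -h * ⟪g (Θ s), G s⟫ = -h * a s + h * (-⟪u - G s, G s⟫) := by
        rw [eP]
        have : ⟪u, G s⟫ = a s + ⟪u - G s, G s⟫ := by linarith [eS]
        rw [this]; ring
      rw [heq]
      linarith
    linarith [hdesc, hfin, ha0 s, Finset.sum_nonneg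
      (fun j (_ : j ∈ Finset.Icc (max 1 (s - τ)) (s - 1)) => ha0 j)]
  -- telescoped loss
  have hteleL : ∀ S : ℕ, 𝓛 (Θ (S + 1)) - 𝓛 (Θ 1) =
      ∑ s ∈ Finset.Icc 1 S, (𝓛 (Θ (s + 1)) - 𝓛 (Θ s)) := by
    intro S
    rw [← Finset.Ico_add_one_right_eq_Icc, Finset.sum_Ico_eq_sub _ (by omega : 1 ≤ S + 1),
      Finset.sum_range_sub (fun i => 𝓛 (Θ i)), Finset.sum_range_sub (fun i => 𝓛 (Θ i))]
    ring
  -- double sum exchange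
  have hdbl : ∀ S : ℕ,
      ∑ s ∈ Finset.Icc 1 S, (∑ j ∈ Finset.Icc (max 1 (s - τ)) (s - 1), a j)
      ≤ (τ : ℝ) * ∑ j ∈ Finset.Icc 1 S, a j := by
    intro S
    have step1 : ∀ s ∈ Finset.Icc 1 S,
        ∑ j ∈ Finset.Icc (max 1 (s - τ)) (s - 1), a j
        = ∑ j ∈ Finset.Icc 1 S, if j ∈ Finset.Icc (max 1 (s - τ)) (s - 1) then a j else 0 := by
      intro s hsS
      rw [Finset.mem_Icc] at hsS
      rw [Finset.sum_ite_mem]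
      congr 1
      symm
      apply Finset.inter_eq_right.mpr
      intro j hj
      rw [Finset.mem_Icc] at hj ⊢
      omega
    rw [Finset.sum_congr rfl step1, Finset.sum_comm]
    have inner_le : ∀ j ∈ Finset.Icc 1 S,
        (∑ s ∈ Finset.Icc 1 S, if j ∈ Finset.Icc (max 1 (s - τ)) (s - 1) then a j else 0)
        ≤ (τ : ℝ) * a j := by
      intro j hj
      have step2 : (∑ s ∈ Finset.Icc 1 S, if j ∈ Finset.Icc (max 1 (s - τ)) (s - 1) then a j else 0)
          ≤ ∑ s ∈ Finset.Icc 1 S, if s ∈ Finset.Icc (j + 1) (j + τ) then a j else 0 := by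
        refine Finset.sum_le_sum fun s hsS => ?_
        rw [Finset.mem_Icc] at hsS
        by_cases hc : j ∈ Finset.Icc (max 1 (s - τ)) (s - 1)
        · rw [if_pos hc]
          rw [Finset.mem_Icc] at hc
          have : s ∈ Finset.Icc (j + 1) (j + τ) := by
            rw [Finset.mem_Icc]; omega
          rw [if_pos this]
        · rw [if_neg hc]
          split
          · exact ha0 j
          · exact le_rfl
      have step3 : (∑ s ∈ Finset.Icc 1 S, if s ∈ Finset.Icc (j + 1) (j + τ) then a j else 0)
          ≤ (τ : ℝ) * a j := by
        rw [Finset.sum_ite_mem, Finset.sum_const, nsmul_eq_mul]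
        have hcard : ((Finset.Icc 1 S ∩ Finset.Icc (j + 1) (j + τ)).card : ℝ) ≤ (τ : ℝ) := by
          have h1 : (Finset.Icc 1 S ∩ Finset.Icc (j + 1) (j + τ)).card
              ≤ (Finset.Icc (j + 1) (j + τ)).card :=
            Finset.card_le_card Finset.inter_subset_right
          have h2 : (Finset.Icc (j + 1) (j + τ)).card = τ := by
            rw [Nat.card_Icc]; omega
          have := le_trans h1 (le_of_eq h2)
          exact_mod_cast this
        exact mul_le_mul_of_nonneg_right hcard (ha0 j)
      linarith
    calc ∑ j ∈ Finset.Icc 1 S, (∑ s ∈ Finset.Icc 1 S,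
          if j ∈ Finset.Icc (max 1 (s - τ)) (s - 1) then a j else 0)
        ≤ ∑ j ∈ Finset.Icc 1 S, (τ : ℝ) * a j := Finset.sum_le_sum inner_le
      _ = (τ : ℝ) * ∑ j ∈ Finset.Icc 1 S, a j := by rw [Finset.mul_sum]
  -- constant c
  set c : ℝ := h - Lc * h ^ 2 * (2 * (τ : ℝ) + 1) / 2 with hc_def
  have hcpos : 0 < c := by
    have h2τ : (0:ℝ) < 2 * (τ : ℝ) + 1 := by positivity
    rw [lt_div_iff₀ h2τ] at hηlt
    have e : c = h * (2 - η * (2 * (τ : ℝ) + 1)) / 2 := by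
      rw [hc_def, ← hLh]; ring
    rw [e]
    apply div_pos (mul_pos hh (by linarith)) (by norm_num)
  clear_value c
  have hLstar : ∀ z, Lstar ≤ 𝓛 z := fun z => hglb.1 ⟨z, rfl⟩
  have hM0 : 0 ≤ 𝓛 (Θ 1) - Lstar := by linarith [hLstar (Θ 1)]
  have hpartial : ∀ S : ℕ, c * ∑ s ∈ Finset.Icc 1 S, a s ≤ 𝓛 (Θ 1) - Lstar := by
    intro S
    have hsnn : 0 ≤ ∑ s ∈ Finset.Icc 1 S, a s := Finset.sum_nonneg fun s _ => ha0 s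
    have hkey : 𝓛 (Θ (S + 1)) - 𝓛 (Θ 1) ≤ -c * ∑ s ∈ Finset.Icc 1 S, a s := by
      rw [hteleL S]
      have sum1 : ∑ s ∈ Finset.Icc 1 S, (𝓛 (Θ (s + 1)) - 𝓛 (Θ s))
          ≤ ∑ s ∈ Finset.Icc 1 S,
            (-h * a s + Lc * h ^ 2 / 2 * (∑ j ∈ Finset.Icc (max 1 (s - τ)) (s - 1), a j)
              + Lc * h ^ 2 * ((τ : ℝ) + 1) / 2 * a s) := by
        refine Finset.sum_le_sum fun s hsS => ?_
        rw [Finset.mem_Icc] at hsS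
        exact hstep s hsS.1
      have sum2 : ∑ s ∈ Finset.Icc 1 S,
            (-h * a s + Lc * h ^ 2 / 2 * (∑ j ∈ Finset.Icc (max 1 (s - τ)) (s - 1), a j)
              + Lc * h ^ 2 * ((τ : ℝ) + 1) / 2 * a s)
          = -h * (∑ s ∈ Finset.Icc 1 S, a s)
            + Lc * h ^ 2 / 2 * (∑ s ∈ Finset.Icc 1 S,
                ∑ j ∈ Finset.Icc (max 1 (s - τ)) (s - 1), a j)
            + Lc * h ^ 2 * ((τ : ℝ) + 1) / 2 * (∑ s ∈ Finset.Icc 1 S, a s) := by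
        rw [Finset.sum_add_distrib, Finset.sum_add_distrib, ← Finset.mul_sum, ← Finset.mul_sum,
          ← Finset.mul_sum]
      have hd := hdbl S
      have hnn : (0:ℝ) ≤ Lc * h ^ 2 / 2 := by positivity
      have hd2 := mul_le_mul_of_nonneg_left hd hnn
      have heq : -c * ∑ s ∈ Finset.Icc 1 S, a s
          = -h * (∑ s ∈ Finset.Icc 1 S, a s)
            + Lc * h ^ 2 / 2 * ((τ : ℝ) * ∑ s ∈ Finset.Icc 1 S, a s)
            + Lc * h ^ 2 * ((τ : ℝ) + 1) / 2 * (∑ s ∈ Finset.Icc 1 S, a s) := by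
        rw [hc_def]; ring
      linarith
    linarith [hLstar (Θ (S + 1))]
  have hIccB : ∀ S : ℕ, ∑ s ∈ Finset.Icc 1 S, a s ≤ (𝓛 (Θ 1) - Lstar) / c := by
    intro S
    rw [le_div_iff₀ hcpos]
    linarith [hpartial S]
  have hsummable : Summable a := by
    apply summable_of_sum_range_le (c := a 0 + (𝓛 (Θ 1) - Lstar) / c) ha0
    intro n
    cases n with
    | zero =>
      simp only [Finset.range_zero, Finset.sum_empty]
      have := div_nonneg hM0 hcpos.le
      linarith [ha0 0]
    | succ m =>
      rw [Finset.sum_range_succ']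
      have he : ∑ i ∈ Finset.range m, a (i + 1) = ∑ j ∈ Finset.Icc 1 m, a j := by
        rw [← Finset.Ico_add_one_right_eq_Icc, Finset.sum_Ico_eq_sum_range]
        refine Finset.sum_congr (by congr 1) fun i _ => by rw [add_comm]
      rw [he]
      linarith [hIccB m]
  have haz : Tendsto a atTop (nhds 0) := hsummable.tendsto_atTop_zero
  have hGz : Tendsto (fun s => ‖G s‖) atTop (nhds 0) := by
    have hsq : Tendsto (fun s => Real.sqrt (a s)) atTop (nhds 0) :=
      (Real.continuous_sqrt.tendsto' 0 0 Real.sqrt_zero).comp haz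
    refine hsq.congr fun s => ?_
    simp only [ha]
    exact Real.sqrt_sq (norm_nonneg _)
  -- Step 3: full gradient tends to zero
  set K := (N + 1) * E with hK_def
  have hKpos : 0 < K := by
    rw [hK_def]; exact Nat.mul_pos (by omega) hE
  set B := 2 * K + τ with hB_def
  have hpick : ∀ s : ℕ, 2 * K ≤ s → ∀ n : Fin (N + 1),
      ∃ j, 1 ≤ j ∧ s - 2 * K + 1 ≤ j ∧ j ≤ s ∧ ms j = n := by
    intro s hs n
    have hKs : K ≤ s := by omega
    have hq1 : 1 ≤ s / K := (Nat.one_le_div_iff hKpos).mpr hKs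
    have hcard := hsched (s / K - 1) n
    have hpos : 0 < ((Finset.Icc ((s / K - 1) * K + 1) ((s / K - 1 + 1) * K)).filter
        fun j => ms j = n).card := by rw [hcard]; omega
    obtain ⟨j, hj⟩ := Finset.card_pos.mp hpos
    rw [Finset.mem_filter, Finset.mem_Icc] at hj
    have e1 : s / K - 1 + 1 = s / K := by omega
    rw [e1] at hj
    have e2 : (s / K - 1) * K + K = s / K * K := by
      conv_rhs => rw [← e1]
      ring
    have e3 : s / K * K + s % K = s := by rw [mul_comm]; exact Nat.div_add_mod s K
    have e4 : s % K < K := Nat.mod_lt _ hKpos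
    obtain ⟨u, hu⟩ : ∃ u, (s / K - 1) * K = u := ⟨_, rfl⟩
    obtain ⟨v, hv⟩ : ∃ v, s / K * K = v := ⟨_, rfl⟩
    obtain ⟨w, hw⟩ : ∃ w, s % K = w := ⟨_, rfl⟩
    rw [hu, hv] at e2
    rw [hv, hw] at e3
    rw [hw] at e4
    rw [hu] at hj
    rw [hv] at hj
    refine ⟨j, by omega, by omega, by omega, hj.2⟩
  set F : ℕ → ℝ := fun s => ∑ i ∈ Finset.Icc (s - B) s, ‖G i‖ with hF
  have hnormθ : ∀ r s : ℕ, 1 ≤ r → r ≤ s →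
      ‖Θ s - Θ r‖ ≤ h * ∑ i ∈ Finset.Ico r s, ‖G i‖ := by
    intro r s h1 hrs
    rw [htel r s hrs]
    calc ‖∑ i ∈ Finset.Ico r s, (Θ (i + 1) - Θ i)‖
        ≤ ∑ i ∈ Finset.Ico r s, ‖Θ (i + 1) - Θ i‖ := norm_sum_le _ _
      _ = ∑ i ∈ Finset.Ico r s, h * ‖G i‖ := by
          refine Finset.sum_congr rfl fun i hi => ?_
          rw [Finset.mem_Ico] at hi
          exact hnormdelta i (le_trans h1 hi.1)
      _ = h * ∑ i ∈ Finset.Ico r s, ‖G i‖ := by rw [Finset.mul_sum]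
  have hperblock : ∀ s : ℕ, B + 1 ≤ s → ∀ n : Fin (N + 1),
      ‖blkProj blk n (g (Θ s))‖ ≤ (2 * Lc * h + 1) * F s := by
    intro s hs n
    obtain ⟨j, hj1, hj2, hj3, hj4⟩ := hpick s (by omega) n
    have hFs : F s = ∑ i ∈ Finset.Icc (s - B) s, ‖G i‖ := rfl
    have hdec : blkProj blk n (g (Θ s)) =
        blkProj blk n (g (Θ s) - g (Θ j)) + blkProj blk n (g (Θ j) - g (hatΘ j (ms j)))
          + G j := by
      simp only [hG]
      rw [hj4, blkProj_sub, blkProj_sub]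
      abel
    have hT1 : ‖blkProj blk n (g (Θ s) - g (Θ j))‖ ≤ Lc * h * F s := by
      refine le_trans (norm_blkProj_le _ _ _) (le_trans (hLip _ _) ?_)
      have h1 := hnormθ j s hj1 hj3
      have h2 : ∑ i ∈ Finset.Ico j s, ‖G i‖ ≤ F s := by
        rw [hFs]
        apply Finset.sum_le_sum_of_subset_of_nonneg
        · intro i hi
          rw [Finset.mem_Ico] at hi
          rw [Finset.mem_Icc]
          omega
        · exact fun i _ _ => norm_nonneg _
      calc Lc * ‖Θ s - Θ j‖ ≤ Lc * (h * ∑ i ∈ Finset.Ico j s, ‖G i‖) :=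
            mul_le_mul_of_nonneg_left h1 hLpos.le
        _ ≤ Lc * (h * F s) := by
            exact mul_le_mul_of_nonneg_left (mul_le_mul_of_nonneg_left h2 hh.le) hLpos.le
        _ = Lc * h * F s := by ring
    have hT2 : ‖blkProj blk n (g (Θ j) - g (hatΘ j (ms j)))‖ ≤ Lc * h * F s := by
      refine le_trans (norm_blkProj_le _ _ _) (le_trans (hLip _ _) ?_)
      have h1 := hstaleb j hj1 (ms j)
      have h2 : ∑ i ∈ Finset.Icc (max 1 (j - τ)) (j - 1), ‖G i‖ ≤ F s := by
        rw [hFs]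
        apply Finset.sum_le_sum_of_subset_of_nonneg
        · intro i hi
          rw [Finset.mem_Icc] at hi ⊢
          omega
        · exact fun i _ _ => norm_nonneg _
      calc Lc * ‖Θ j - hatΘ j (ms j)‖
          ≤ Lc * (h * ∑ i ∈ Finset.Icc (max 1 (j - τ)) (j - 1), ‖G i‖) :=
            mul_le_mul_of_nonneg_left h1 hLpos.le
        _ ≤ Lc * (h * F s) :=
            mul_le_mul_of_nonneg_left (mul_le_mul_of_nonneg_left h2 hh.le) hLpos.le
        _ = Lc * h * F s := by ring
    have hT3 : ‖G j‖ ≤ F s := by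
      rw [hFs]
      refine Finset.single_le_sum (fun i _ => norm_nonneg _) ?_
      rw [Finset.mem_Icc]
      omega
    calc ‖blkProj blk n (g (Θ s))‖
        = ‖blkProj blk n (g (Θ s) - g (Θ j)) + blkProj blk n (g (Θ j) - g (hatΘ j (ms j)))
            + G j‖ := by rw [← hdec]
      _ ≤ ‖blkProj blk n (g (Θ s) - g (Θ j))‖ + ‖blkProj blk n (g (Θ j) - g (hatΘ j (ms j)))‖
            + ‖G j‖ := norm_add₃_le
      _ ≤ Lc * h * F s + (Lc * h * F s) + F s := by linarith
      _ = (2 * Lc * h + 1) * F s := by ring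
  have hgbound : ∀ s : ℕ, B + 1 ≤ s →
      ‖g (Θ s)‖ ≤ ((N : ℝ) + 1) * ((2 * Lc * h + 1) * F s) := by
    intro s hs
    calc ‖g (Θ s)‖ = ‖∑ n : Fin (N + 1), blkProj blk n (g (Θ s))‖ := by
          rw [sum_blkProj]
      _ ≤ ∑ n : Fin (N + 1), ‖blkProj blk n (g (Θ s))‖ := norm_sum_le _ _
      _ ≤ ∑ _n : Fin (N + 1), (2 * Lc * h + 1) * F s :=
          Finset.sum_le_sum fun n _ => hperblock s hs n
      _ = ((N : ℝ) + 1) * ((2 * Lc * h + 1) * F s) := by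
          rw [Finset.sum_const, Finset.card_univ, Fintype.card_fin, nsmul_eq_mul]
          push_cast
          ring
  have hFeq : ∀ s : ℕ, B ≤ s → F s = ∑ k ∈ Finset.range (B + 1), ‖G (s - k)‖ := by
    intro s hs
    have hset : Finset.Icc (s - B) s = (Finset.range (B + 1)).image (fun k => s - k) := by
      ext i
      simp only [Finset.mem_Icc, Finset.mem_image, Finset.mem_range]
      constructor
      · intro hi
        exact ⟨s - i, by omega, by omega⟩
      · rintro ⟨k, hk, rfl⟩
        omega
    show ∑ i ∈ Finset.Icc (s - B) s, ‖G i‖ = _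
    rw [hset, Finset.sum_image]
    intro k1 hk1 k2 hk2 he
    rw [Finset.mem_coe, Finset.mem_range] at hk1 hk2
    dsimp only at he
    omega
  have hFz : Tendsto F atTop (nhds 0) := by
    have hterm : ∀ k : ℕ, Tendsto (fun s : ℕ => ‖G (s - k)‖) atTop (nhds 0) := fun k =>
      hGz.comp (tendsto_sub_atTop_nat k)
    have hsum0 : Tendsto (fun s => ∑ k ∈ Finset.range (B + 1), ‖G (s - k)‖) atTop (nhds 0) := by
      have := tendsto_finset_sum (Finset.range (B + 1)) (fun k _ => hterm k)
      simpa using this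
    refine Tendsto.congr' ?_ hsum0
    filter_upwards [Filter.eventually_ge_atTop B] with s hs
    exact (hFeq s hs).symm
  have hgz : Tendsto (fun s => ‖g (Θ s)‖) atTop (nhds 0) := by
    apply squeeze_zero' (Filter.Eventually.of_forall fun s => norm_nonneg _)
    · filter_upwards [Filter.eventually_ge_atTop (B + 1)] with s hs
      exact hgbound s hs
    · have := hFz.const_mul (((N : ℝ) + 1) * (2 * Lc * h + 1))
      simp only [mul_zero] at this
      refine this.congr fun s => ?_
      ring
  have hfinal := hgz.pow 2
  simpa using hfinal
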